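/- Let x, y be real numbers with 0 < x and 0 ≤ y < 1 and 4x < (1−y)². Then ∑_{k,k'≥0} ((2k+k'+1)!/((k+1)! k! k'!)) x^k y^{k'} = (1/(2x)) · ((1−y)/√((1−y)² − 4x) − 1). -/

import Mathlib

open Finset

noncomputable def cbR (n : ℕ) : ℝ := n.centralBinom

lemma cbR_succ (n : ℕ) : ((n:ℝ)+1) * cbR (n+1) = 2 * (2*n+1) * cbR n := by
  have h := Nat.succ_mul_centralBinom_succ n
  have : ((n+1) * Nat.centralBinom (n+1) : ℝ) = (2 * (2*n+1) * Nat.centralBinom n : ℝ) := by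
    exact_mod_cast congrArg (Nat.cast (R := ℝ)) h
  push_cast at this
  unfold cbR
  linarith

lemma cbR_conv (n : ℕ) : ∑ i ∈ range (n+1), cbR i * cbR (n - i) = 4 ^ n := by
  induction n with
  | zero => simp [cbR, Nat.centralBinom]
  | succ n ih =>
    have hB : ∑ j ∈ range (n+1), (2*(j:ℝ)+1) * (cbR j * cbR (n-j))
        = ((n:ℝ)+1) * ∑ i ∈ range (n+1), cbR i * cbR (n - i) := by
      have hrefl : ∑ j ∈ range (n+1), (2*(j:ℝ)+1) * (cbR j * cbR (n-j))
          = ∑ j ∈ range (n+1), (2*((n:ℝ)-j)+1) * (cbR j * cbR (n-j)) := by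
        rw [← Finset.sum_range_reflect]
        apply Finset.sum_congr rfl
        intro j hj
        simp only [Finset.mem_range] at hj
        have hj' : j ≤ n := by omega
        have h1 : n - (n - j) = j := by omega
        rw [Nat.add_sub_cancel, h1]
        have : ((n - j : ℕ) : ℝ) = (n:ℝ) - j := by
          push_cast [hj']; ring
        rw [this]
        ring
      have : 2 * ∑ j ∈ range (n+1), (2*(j:ℝ)+1) * (cbR j * cbR (n-j))
          = ∑ j ∈ range (n+1), (2*(n:ℝ)+2) * (cbR j * cbR (n-j)) := by
        rw [two_mul]
        nth_rewrite 2 [hrefl]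
        rw [← Finset.sum_add_distrib]
        apply Finset.sum_congr rfl
        intro j hj
        ring
      rw [Finset.mul_sum]
      have h2 : ∑ j ∈ range (n+1), (2*(n:ℝ)+2) * (cbR j * cbR (n-j))
          = 2 * ∑ j ∈ range (n+1), ((n:ℝ)+1) * (cbR j * cbR (n-j)) := by
        rw [Finset.mul_sum]; apply Finset.sum_congr rfl; intros; ring
      have h3 := this.trans h2
      have := mul_left_cancel₀ (two_ne_zero (α := ℝ)) h3
      exact this
    -- A = ∑_{i∈range(n+2)} i * cbR i * cbR (n+1-i)
    have hA : ∑ i ∈ range (n+2), (i:ℝ) * (cbR i * cbR (n+1-i))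
        = 2 * ∑ j ∈ range (n+1), (2*(j:ℝ)+1) * (cbR j * cbR (n-j)) := by
      rw [Finset.sum_range_succ' (fun i => (i:ℝ) * (cbR i * cbR (n+1-i))) (n+1)]
      simp only [Nat.cast_zero, zero_mul, add_zero]
      rw [Finset.mul_sum]
      apply Finset.sum_congr rfl
      intro j hj
      simp only [Finset.mem_range] at hj
      have h1 : n + 1 - (j+1) = n - j := by omega
      rw [h1]
      push_cast
      have := cbR_succ j
      calc ((j:ℝ)+1) * (cbR (j+1) * cbR (n-j)) = (((j:ℝ)+1) * cbR (j+1)) * cbR (n-j) := by ring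
        _ = (2 * (2*(j:ℝ)+1) * cbR j) * cbR (n-j) := by rw [this]
        _ = 2 * ((2*(j:ℝ)+1) * (cbR j * cbR (n-j))) := by ring
    have hA' : ∑ i ∈ range (n+2), ((n:ℝ)+1-i) * (cbR i * cbR (n+1-i))
        = ∑ i ∈ range (n+2), (i:ℝ) * (cbR i * cbR (n+1-i)) := by
      rw [← Finset.sum_range_reflect]
      apply Finset.sum_congr rfl
      intro j hj
      simp only [Finset.mem_range] at hj
      have hj' : j ≤ n + 1 := by omega
      have h1 : n + 1 - (n + 1 - j) = j := by omega
      have h2 : n + 2 - 1 - j = n + 1 - j := by omega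
      rw [h2, h1]
      have : ((n + 1 - j : ℕ) : ℝ) = (n:ℝ) + 1 - j := by push_cast [hj']; ring
      rw [this]
      ring
    -- (n+1) T = 2A
    have hT : ((n:ℝ)+1) * ∑ i ∈ range (n+2), cbR i * cbR (n+1-i)
        = 2 * ∑ i ∈ range (n+2), (i:ℝ) * (cbR i * cbR (n+1-i)) := by
      rw [Finset.mul_sum]
      rw [two_mul]
      nth_rewrite 1 [← hA']
      rw [← Finset.sum_add_distrib]
      apply Finset.sum_congr rfl
      intros; ring
    have hnz : ((n:ℝ)+1) ≠ 0 := by positivity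
    have : ((n:ℝ)+1) * ∑ i ∈ range (n+2), cbR i * cbR (n+1-i)
        = ((n:ℝ)+1) * (4 ^ (n+1)) := by
      rw [hT, hA, hB, ih]; ring
    have := mul_left_cancel₀ hnz this
    simpa using this

lemma cbR_nonneg (n : ℕ) : 0 ≤ cbR n := Nat.cast_nonneg _

lemma cbR_le (n : ℕ) : cbR n ≤ 4 ^ n := by
  have h1 : n.centralBinom ≤ (2*n+1).choose n :=
    Nat.choose_le_choose n (by omega)
  have h2 := Nat.choose_middle_le_pow n
  have : n.centralBinom ≤ 4 ^ n := le_trans h1 h2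
  unfold cbR
  exact_mod_cast this

lemma summable_cbR {u : ℝ} (hu0 : 0 ≤ u) (hu : 4 * u < 1) :
    Summable (fun n => |cbR n * u ^ n|) := by
  apply Summable.of_nonneg_of_le (fun n => abs_nonneg _) (fun n => ?_)
    (summable_geometric_of_lt_one (by positivity) (by linarith) : Summable fun n => (4*u)^n)
  rw [abs_of_nonneg (mul_nonneg (cbR_nonneg n) (pow_nonneg hu0 n))]
  rw [mul_pow]
  exact mul_le_mul_of_nonneg_right (cbR_le n) (by positivity)

lemma hasSum_cbR {u : ℝ} (hu0 : 0 ≤ u) (hu : 4 * u < 1) :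
    HasSum (fun n => cbR n * u ^ n) (1 / Real.sqrt (1 - 4 * u)) := by
  have hsum : Summable (fun n => cbR n * u ^ n) := (summable_cbR hu0 hu).of_abs
  set S := ∑' n, cbR n * u ^ n with hS
  have hnorm : Summable (fun n => ‖cbR n * u ^ n‖) := by
    simpa only [Real.norm_eq_abs] using summable_cbR hu0 hu
  have hsq : S * S = 1 / (1 - 4 * u) := by
    rw [hS, tsum_mul_tsum_eq_tsum_sum_range_of_summable_norm hnorm hnorm]
    have : ∀ n : ℕ, ∑ k ∈ Finset.range (n+1), (cbR k * u ^ k) * (cbR (n-k) * u ^ (n-k))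
        = (4*u) ^ n := by
      intro n
      rw [mul_pow, ← cbR_conv n, Finset.sum_mul]
      apply Finset.sum_congr rfl
      intro k hk
      simp only [Finset.mem_range] at hk
      have : u ^ k * u ^ (n - k) = u ^ n := by
        rw [← pow_add]
        congr 1
        omega
      calc (cbR k * u ^ k) * (cbR (n-k) * u ^ (n-k))
          = cbR k * cbR (n-k) * (u ^ k * u ^ (n-k)) := by ring
        _ = cbR k * cbR (n-k) * u ^ n := by rw [this]
    rw [tsum_congr this, tsum_geometric_of_lt_one (by linarith) (by linarith), one_div]
  have hSpos : 0 ≤ S := tsum_nonneg (fun n => mul_nonneg (cbR_nonneg n) (pow_nonneg hu0 n))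
  have h1 : (0:ℝ) < 1 - 4 * u := by linarith
  have hSeq : S = 1 / Real.sqrt (1 - 4 * u) := by
    have : S = Real.sqrt (S * S) := by
      rw [Real.sqrt_mul_self hSpos]
    rw [this, hsq, one_div, one_div, Real.sqrt_inv]
  rw [← hSeq]
  exact hsum.hasSum

lemma cb_succ_choose (k : ℕ) : Nat.centralBinom (k+1) = 2 * (2*k+1).choose k := by
  unfold Nat.centralBinom
  have h : 2*(k+1) = (2*k+1)+1 := by ring
  rw [h, show (2*k+1)+1 = (2*k)+1+1 from rfl]
  rw [Nat.choose_succ_succ']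
  rw [Nat.choose_symm_half k]
  omega

lemma coef_eq (k k' : ℕ) :
    ((2*k+k'+1).factorial : ℝ) / (((k+1).factorial : ℝ) * k.factorial * k'.factorial)
      = ((2*k+1).choose k : ℝ) * ((2*k+1+k').choose k' : ℝ) := by
  have h1 : ((2*k+1).choose k : ℝ) * k.factorial * (k+1).factorial = (2*k+1).factorial := by
    have h := Nat.choose_mul_factorial_mul_factorial (show k ≤ 2*k+1 by omega)
    have h' : 2*k+1-k = k+1 := by omega
    rw [h'] at h
    exact_mod_cast h
  have h2 : ((2*k+1+k').choose k' : ℝ) * (2*k+1).factorial * k'.factorial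
      = (2*k+1+k').factorial := by
    exact_mod_cast Nat.add_choose_mul_factorial_mul_factorial (2*k+1) k'
  have e : 2*k+k'+1 = 2*k+1+k' := by omega
  rw [e, div_eq_iff (by positivity)]
  linear_combination (-((2*k+1+k').choose k' : ℝ)) * k'.factorial * h1 - h2



/-- For x > 0, 0 ≤ y < 1 and 4x < (1−y)²:
∑_{k,k'} (2k+k'+1)!/((k+1)!k!k'!) xᵏ y^{k'} = (1/(2x))·((1−y)/√((1−y)²−4x) − 1). -/
theorem stmt_13 (x y : ℝ) (hx : 0 < x) (hy0 : 0 ≤ y) (hy1 : y < 1)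
    (hxy : 4 * x < (1 - y) ^ 2) :
    ∑' p : ℕ × ℕ,
      ((2 * p.1 + p.2 + 1).factorial : ℝ) /
        (((p.1 + 1).factorial : ℝ) * p.1.factorial * p.2.factorial) * x ^ p.1 * y ^ p.2
      = (1 / (2 * x)) * ((1 - y) / Real.sqrt ((1 - y) ^ 2 - 4 * x) - 1) := by

  set d : ℝ := 1 - y with hd_def
  have hd : 0 < d := by simp [hd_def]; linarith
  set u : ℝ := x / d ^ 2 with hu_def
  have hu0 : 0 < u := by positivity
  have h4u : 4 * u < 1 := by
    rw [hu_def, ← mul_div_assoc]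
    exact (div_lt_one (by positivity)).mpr hxy
  -- inner sums
  have hinner : ∀ k : ℕ, HasSum
      (fun k' : ℕ => ((2 * k + k' + 1).factorial : ℝ) /
        (((k + 1).factorial : ℝ) * k.factorial * k'.factorial) * x ^ k * y ^ k')
      (((2*k+1).choose k : ℝ) * x ^ k * (1 / (1 - y) ^ (2*k+2))) := by
    intro k
    have hy : ‖y‖ < 1 := by rw [Real.norm_eq_abs, abs_of_nonneg hy0]; exact hy1
    have h := (hasSum_choose_mul_geometric_of_norm_lt_one (𝕜 := ℝ) (2*k+1) hy).mul_left
      (((2*k+1).choose k : ℝ) * x ^ k)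
    convert h using 2 with k'
    · rfl
    rw [coef_eq k k']
    have hsymm : (2*k+1+k').choose k' = (k' + (2*k+1)).choose (2*k+1) := by
      rw [add_comm (2*k+1) k']
      rw [← Nat.choose_symm (Nat.le_add_left (2*k+1) k')]
      congr 1
      omega
    rw [hsymm]
    ring
  -- rewrite inner value
  have hval : ∀ k : ℕ, ((2*k+1).choose k : ℝ) * x ^ k * (1 / (1 - y) ^ (2*k+2))
      = (1 / (2*x)) * (cbR (k+1) * u ^ (k+1)) := by
    intro k
    have hc : cbR (k+1) = 2 * ((2*k+1).choose k : ℝ) := by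
      unfold cbR
      exact_mod_cast cb_succ_choose k
    have hup : u ^ (k+1) = x ^ (k+1) / d ^ (2*k+2) := by
      rw [hu_def, div_pow, ← pow_mul, show 2*(k+1) = 2*k+2 from by omega]
    rw [hc, hup, hd_def]
    have : (1 - y) ^ (2*k+2) ≠ 0 := by
      have : (0:ℝ) < 1 - y := by linarith
      positivity
    field_simp
    ring
  -- outer sum
  have houter : HasSum (fun k : ℕ => (1 / (2*x)) * (cbR (k+1) * u ^ (k+1)))
      ((1 / (2*x)) * (1 / Real.sqrt (1 - 4*u) - 1)) := by
    apply HasSum.mul_left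
    have h := hasSum_cbR (le_of_lt hu0) h4u
    have h1 : HasSum (fun n : ℕ => cbR (n+1) * u ^ (n+1))
        (1 / Real.sqrt (1 - 4*u) - ∑ i ∈ Finset.range 1, cbR i * u ^ i) :=
      ((hasSum_nat_add_iff' 1).mpr h)
    simpa [cbR, Nat.centralBinom] using h1
  -- summability on the product
  set f : ℕ × ℕ → ℝ := fun p =>
    ((2 * p.1 + p.2 + 1).factorial : ℝ) /
      (((p.1 + 1).factorial : ℝ) * p.1.factorial * p.2.factorial) * x ^ p.1 * y ^ p.2
    with hf_def
  have hf0 : ∀ p, 0 ≤ f p := by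
    intro p
    have : (0:ℝ) ≤ y ^ p.2 := pow_nonneg hy0 _
    positivity
  have hsumm : Summable f := by
    rw [summable_prod_of_nonneg hf0]
    constructor
    · intro k
      exact (hinner k).summable
    · apply Summable.congr (houter.summable)
      intro k
      rw [← hval k, ← (hinner k).tsum_eq]
  rw [Summable.tsum_prod' hsumm (fun k => (hinner k).summable)]
  have : ∀ k : ℕ, ∑' k', f (k, k') = (1 / (2*x)) * (cbR (k+1) * u ^ (k+1)) := by
    intro k
    rw [(hinner k).tsum_eq, hval k]
  rw [tsum_congr this, houter.tsum_eq]
  -- final simplification of the sqrt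
  have hsq : Real.sqrt (1 - 4*u) = Real.sqrt (d ^ 2 - 4 * x) / d := by
    have h1 : 1 - 4*u = (d ^ 2 - 4 * x) / d ^ 2 := by
      rw [hu_def]
      field_simp
    rw [h1, Real.sqrt_div (by linarith) , Real.sqrt_sq (le_of_lt hd)]
  rw [hsq]
  rw [one_div (Real.sqrt (d ^ 2 - 4 * x) / d), inv_div]
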